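/- Let m ≥ 1, R > 1, and let 𝒜 = (A_n)_{n∈ℤ} be a sequence of linear isomorphisms of ℝ^m with ‖A_n‖ < R and ‖A_n⁻¹‖ < R for all n. Suppose 𝒜 has property SG(γ) for some γ ∈ (0,1), suppose 𝒜 has exponential dichotomy on ℤ⁺ witnessed by subspaces (E_k^{s,+}, E_k^{u,+})_{k≥0} and exponential dichotomy on ℤ⁻ witnessed by subspaces (E_k^{s,−}, E_k^{u,−})_{k≤0}. Then E_0^{s,+} + E_0^{u,−} = ℝ^m. -/

import Mathlib

noncomputable section

abbrev Euc (m : ℕ) := EuclideanSpace ℝ (Fin m)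

/-- The cocycle `A_{k+l-1} ∘ ⋯ ∘ A_k`. -/
def Phi (m : ℕ) (A : ℤ → Euc m ≃L[ℝ] Euc m) (k : ℤ) : ℕ → Euc m → Euc m
  | 0 => fun v => v
  | l + 1 => fun v => A (k + l) (Phi m A k l v)

/-- Slow growth property with exponent γ. -/
def SG (m : ℕ) (A : ℤ → Euc m ≃L[ℝ] Euc m) (γ : ℝ) : Prop :=
  ∃ L : ℝ, 0 < L ∧ ∀ (i : ℤ) (N : ℕ), 1 ≤ N →
    ∀ w : ℤ → Euc m, (∀ k : ℤ, i + 1 ≤ k → k ≤ i + N → ‖w k‖ ≤ 1) →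
    ∃ v : ℤ → Euc m,
      (∀ k : ℤ, i ≤ k → k ≤ i + N - 1 → v (k + 1) = A k (v k) + w (k + 1)) ∧
      (∀ k : ℤ, i ≤ k → k ≤ i + N → ‖v k‖ ≤ L * (N : ℝ) ^ γ)

/-- Exponential dichotomy on ℤ⁺ with witnessing subspaces Es, Eu. -/
def ExpDichPos (m : ℕ) (A : ℤ → Euc m ≃L[ℝ] Euc m)
    (Es Eu : ℤ → Submodule ℝ (Euc m)) : Prop :=
  ∃ C : ℝ, 0 < C ∧ ∃ lam : ℝ, lam ∈ Set.Ioo (0 : ℝ) 1 ∧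
    (∀ k : ℤ, 0 ≤ k → IsCompl (Es k) (Eu k)) ∧
    (∀ k : ℤ, 0 ≤ k → (Es k).map ((A k : Euc m →L[ℝ] Euc m) : Euc m →ₗ[ℝ] Euc m) = Es (k + 1)) ∧
    (∀ k : ℤ, 0 ≤ k → (Eu k).map ((A k : Euc m →L[ℝ] Euc m) : Euc m →ₗ[ℝ] Euc m) = Eu (k + 1)) ∧
    (∀ k : ℤ, 0 ≤ k → ∀ l : ℕ, 0 < l → ∀ v ∈ Es k,
      ‖Phi m A k l v‖ ≤ C * lam ^ l * ‖v‖) ∧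
    (∀ k : ℤ, 0 ≤ k → ∀ l : ℕ, 0 < l → ∀ v ∈ Eu k,
      C⁻¹ * lam ^ (-(l : ℤ)) * ‖v‖ ≤ ‖Phi m A k l v‖)

/-- Exponential dichotomy on ℤ⁻ with witnessing subspaces Es, Eu. -/
def ExpDichNeg (m : ℕ) (A : ℤ → Euc m ≃L[ℝ] Euc m)
    (Es Eu : ℤ → Submodule ℝ (Euc m)) : Prop :=
  ∃ C : ℝ, 0 < C ∧ ∃ lam : ℝ, lam ∈ Set.Ioo (0 : ℝ) 1 ∧
    (∀ k : ℤ, k ≤ 0 → IsCompl (Es k) (Eu k)) ∧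
    (∀ k : ℤ, k < 0 → (Es k).map ((A k : Euc m →L[ℝ] Euc m) : Euc m →ₗ[ℝ] Euc m) = Es (k + 1)) ∧
    (∀ k : ℤ, k < 0 → (Eu k).map ((A k : Euc m →L[ℝ] Euc m) : Euc m →ₗ[ℝ] Euc m) = Eu (k + 1)) ∧
    (∀ (k : ℤ) (l : ℕ), 0 < l → k + l ≤ 0 → ∀ v ∈ Es k,
      ‖Phi m A k l v‖ ≤ C * lam ^ l * ‖v‖) ∧
    (∀ (k : ℤ) (l : ℕ), 0 < l → k + l ≤ 0 → ∀ v ∈ Eu k,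
      C⁻¹ * lam ^ (-(l : ℤ)) * ‖v‖ ≤ ‖Phi m A k l v‖)

open Filter Topology
open scoped RealInnerProductSpace

lemma Phi_add (m : ℕ) (A : ℤ → Euc m ≃L[ℝ] Euc m) (k : ℤ) (l : ℕ) (x y : Euc m) :
    Phi m A k l (x + y) = Phi m A k l x + Phi m A k l y := by
  induction l with
  | zero => rfl
  | succ n ih => simp [Phi, ih]

/-- The key limit: for `0 < μ < 1`, `n * μ^n → 0`. -/
lemma tendsto_nat_mul_pow {μ : ℝ} (h0 : 0 < μ) (h1 : μ < 1) :
    Tendsto (fun n : ℕ => (n : ℝ) * μ ^ n) atTop (𝓝 0) := by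
  have := (summable_pow_mul_geometric_of_norm_lt_one 1
    (r := μ) (by rw [Real.norm_eq_abs, abs_of_pos h0]; exact h1)).tendsto_atTop_zero
  simpa [pow_one] using this

set_option maxHeartbeats 1000000 in
/-- Lemma 6.1 ("lemSTC"): slow (sublinear) growth together with exponential
dichotomies on both half-axes (A1) implies the transversality condition (A2). -/
theorem slow_growth_and_dichotomy_implies_transversality
    (m : ℕ) (hm : 1 ≤ m) (R : ℝ) (hR : 1 < R)
    (A : ℤ → Euc m ≃L[ℝ] Euc m)
    (hAbound : ∀ n : ℤ, ‖(A n : Euc m →L[ℝ] Euc m)‖ < R ∧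
      ‖((A n).symm : Euc m →L[ℝ] Euc m)‖ < R)
    (γ : ℝ) (hγ : γ ∈ Set.Ioo (0 : ℝ) 1) (hSG : SG m A γ)
    (Esp Eup Esm Eum : ℤ → Submodule ℝ (Euc m))
    (hpos : ExpDichPos m A Esp Eup) (hneg : ExpDichNeg m A Esm Eum) :
    Esp 0 ⊔ Eum 0 = ⊤ := by
  classical
  by_contra hne
  obtain ⟨L, hL, hSGm⟩ := hSG
  obtain ⟨Cp, hCp, lp, ⟨hlp0, hlp1⟩, hcp, hmsp, hmup, hsp, hup⟩ := hpos
  obtain ⟨Cm, hCm, lm, ⟨hlm0, hlm1⟩, hcm, hmsm, hmum, hsm, hum⟩ := hneg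
  -- pick a unit vector orthogonal to `Esp 0 ⊔ Eum 0`
  have hKbot : ((Esp 0 ⊔ Eum 0)ᗮ) ≠ ⊥ := fun h =>
    hne (Submodule.orthogonal_eq_bot_iff.mp h)
  obtain ⟨z0, hz0K, hz0⟩ := Submodule.exists_mem_ne_zero_of_ne_bot hKbot
  set z : Euc m := (‖z0‖⁻¹ : ℝ) • z0 with hzdef
  have hzK : z ∈ (Esp 0 ⊔ Eum 0)ᗮ := Submodule.smul_mem _ _ hz0K
  have hz1 : ‖z‖ = 1 := norm_smul_inv_norm hz0
  have hzs : ∀ x ∈ Esp 0, ⟪z, x⟫ = 0 := fun x hx =>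
    (Submodule.mem_orthogonal' _ _).mp hzK x (Submodule.mem_sup_left hx)
  have hzu : ∀ x ∈ Eum 0, ⟪z, x⟫ = 0 := fun x hx =>
    (Submodule.mem_orthogonal' _ _).mp hzK x (Submodule.mem_sup_right hx)
  -- choose a suitable large N
  have hsq_p : Tendsto (fun n : ℕ => (Cp * lp ^ n) ^ 2) atTop (𝓝 0) := by
    have h := (tendsto_pow_atTop_nhds_zero_of_lt_one
      (by positivity : (0:ℝ) ≤ lp * lp) (by nlinarith)).const_mul (Cp ^ 2)
    simp only [mul_zero] at h
    refine h.congr fun n => ?_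
    ring
  have hsq_m : Tendsto (fun n : ℕ => (Cm * lm ^ n) ^ 2) atTop (𝓝 0) := by
    have h := (tendsto_pow_atTop_nhds_zero_of_lt_one
      (by positivity : (0:ℝ) ≤ lm * lm) (by nlinarith)).const_mul (Cm ^ 2)
    simp only [mul_zero] at h
    refine h.congr fun n => ?_
    ring
  have hmain : Tendsto (fun n : ℕ =>
      2 * (1 + Cp) * (Cp * lp ^ n) * (L * (2 * (n : ℝ))) +
      (Cm * lm ^ n) * (L * (2 * (n : ℝ)) + 1) * (1 + 2 * Cm * (1 + Cm)))
      atTop (𝓝 0) := by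
    have t1 := (tendsto_nat_mul_pow hlp0 hlp1).const_mul (4 * (1 + Cp) * Cp * L)
    have t2 := (tendsto_nat_mul_pow hlm0 hlm1).const_mul
      (2 * L * Cm * (1 + 2 * Cm * (1 + Cm)))
    have t3 := (tendsto_pow_atTop_nhds_zero_of_lt_one hlm0.le hlm1).const_mul
      (Cm * (1 + 2 * Cm * (1 + Cm)))
    have h := (t1.add (t2.add t3))
    simp only [mul_zero, add_zero] at h
    refine h.congr fun n => ?_
    ring
  obtain ⟨N, hN1, hNE, hNp, hNm⟩ :
      ∃ N : ℕ, 1 ≤ N ∧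
        (2 * (1 + Cp) * (Cp * lp ^ N) * (L * (2 * (N : ℝ))) +
         (Cm * lm ^ N) * (L * (2 * (N : ℝ)) + 1) * (1 + 2 * Cm * (1 + Cm)) < 1) ∧
        (Cp * lp ^ N) ^ 2 ≤ 1 / 2 ∧ (Cm * lm ^ N) ^ 2 ≤ 1 / 2 := by
    have e1 := eventually_ge_atTop 1
    have e2 := hmain.eventually_lt_const (by norm_num : (0:ℝ) < 1)
    have e3 := hsq_p.eventually_le_const (by norm_num : (0:ℝ) < 1 / 2)
    have e4 := hsq_m.eventually_le_const (by norm_num : (0:ℝ) < 1 / 2)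
    obtain ⟨N, h⟩ := (e1.and (e2.and (e3.and e4))).exists
    exact ⟨N, h.1, h.2.1, h.2.2.1, h.2.2.2⟩
  have hNpos : 0 < N := hN1
  -- apply SG with i = -N, length 2N, input z at time 0
  set w : ℤ → Euc m := fun k => if k = 0 then z else 0 with hwdef
  have hwle : ∀ k : ℤ, -(N:ℤ) + 1 ≤ k → k ≤ -(N:ℤ) + (2*N : ℕ) → ‖w k‖ ≤ 1 := by
    intro k _ _
    by_cases h : k = 0
    · simp [hwdef, h, hz1]
    · simp [hwdef, h]
  obtain ⟨v, hrec, hbnd⟩ := hSGm (-(N:ℤ)) (2*N) (by omega) w hwle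
  set M : ℝ := L * ((2*N : ℕ) : ℝ) ^ γ with hMdef
  have hM0 : 0 ≤ M := by positivity
  have hbnd0 : ‖v 0‖ ≤ M := hbnd 0 (by omega) (by push_cast; omega)
  have hbndN : ‖v (N:ℤ)‖ ≤ M := hbnd (N:ℤ) (by omega) (by push_cast; omega)
  have hbndmN : ‖v (-(N:ℤ))‖ ≤ M := hbnd (-(N:ℤ)) le_rfl (by push_cast; omega)
  -- the solution on [0, N] is a genuine orbit
  have claimA : ∀ n : ℕ, n ≤ N → v (n : ℤ) = Phi m A 0 n (v 0) := by
    intro n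
    induction n with
    | zero => intro _; simp [Phi]
    | succ k ih =>
      intro hn
      have hk : k ≤ N := by omega
      have h1 : v ((k:ℤ) + 1) = A (k:ℤ) (v (k:ℤ)) + w ((k:ℤ) + 1) :=
        hrec (k:ℤ) (by omega) (by push_cast; omega)
      have hw0 : w ((k:ℤ) + 1) = 0 := if_neg (by omega)
      have h2 : v ((k:ℤ) + 1) = A (k:ℤ) (Phi m A 0 k (v 0)) := by
        rw [h1, hw0, add_zero, ih hk]
      rw [show ((k + 1 : ℕ) : ℤ) = (k:ℤ) + 1 by push_cast; ring, h2]
      simp [Phi]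
  -- the solution on [-N, -1] is a genuine orbit
  have claimB : ∀ n : ℕ, n < N → v (-(N:ℤ) + n) = Phi m A (-(N:ℤ)) n (v (-(N:ℤ))) := by
    intro n
    induction n with
    | zero => intro _; simp [Phi]
    | succ k ih =>
      intro hn
      have hk : k < N := by omega
      have h1 : v ((-(N:ℤ) + k) + 1) = A (-(N:ℤ) + k) (v (-(N:ℤ) + k)) + w ((-(N:ℤ) + k) + 1) :=
        hrec (-(N:ℤ) + k) (by omega) (by push_cast; omega)
      have hw0 : w ((-(N:ℤ) + k) + 1) = 0 := if_neg (by omega)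
      have h2 : v ((-(N:ℤ) + k) + 1) = A (-(N:ℤ) + k) (Phi m A (-(N:ℤ)) k (v (-(N:ℤ)))) := by
        rw [h1, hw0, add_zero, ih hk]
      rw [show -(N:ℤ) + ((k + 1 : ℕ) : ℤ) = (-(N:ℤ) + k) + 1 by push_cast; ring, h2]
      simp [Phi]
  -- v 0 in terms of v (-N)
  have hv0 : v 0 = Phi m A (-(N:ℤ)) N (v (-(N:ℤ))) + z := by
    obtain ⟨K, hK⟩ : ∃ K, N = K + 1 := ⟨N - 1, by omega⟩
    have h1 : v ((-(N:ℤ) + K) + 1) = A (-(N:ℤ) + K) (v (-(N:ℤ) + K)) + w ((-(N:ℤ) + K) + 1) :=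
      hrec (-(N:ℤ) + K) (by omega) (by push_cast; omega)
    have hwz : w ((-(N:ℤ) + K) + 1) = z := if_pos (by omega)
    have h2 : v (-(N:ℤ) + K) = Phi m A (-(N:ℤ)) K (v (-(N:ℤ))) := claimB K (by omega)
    have e0 : ((-(N:ℤ) + K) + 1) = 0 := by omega
    have ePhi : Phi m A (-(N:ℤ)) N (v (-(N:ℤ)))
        = A (-(N:ℤ) + K) (Phi m A (-(N:ℤ)) K (v (-(N:ℤ)))) := by
      rw [hK]; simp [Phi]
    rw [← e0, h1, hwz, h2, ePhi]
  -- Phi maps Eum (-N) into Eum 0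
  have claimC : ∀ u : Euc m, u ∈ Eum (-(N:ℤ)) → ∀ n : ℕ, n ≤ N →
      Phi m A (-(N:ℤ)) n u ∈ Eum (-(N:ℤ) + n) := by
    intro u hu n
    induction n with
    | zero => intro _; simpa [Phi] using hu
    | succ k ih =>
      intro hn
      have hk := ih (by omega)
      have hlt : -(N:ℤ) + k < 0 := by omega
      have hmem : A (-(N:ℤ) + k) (Phi m A (-(N:ℤ)) k u) ∈ Eum ((-(N:ℤ) + k) + 1) := by
        rw [← hmum (-(N:ℤ) + k) hlt]
        exact Submodule.mem_map_of_mem hk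
      have e : (-(N:ℤ) + ((k + 1 : ℕ) : ℤ)) = (-(N:ℤ) + k) + 1 := by push_cast; ring
      rw [e]
      simpa [Phi] using hmem
  -- decompose v 0 with the positive dichotomy at time 0
  obtain ⟨s0, hs0, u0, hu0, hsum0⟩ :=
    Submodule.mem_sup.mp (by
      rw [codisjoint_iff.mp (hcp 0 le_rfl).codisjoint]; trivial :
      v 0 ∈ Esp 0 ⊔ Eup 0)
  -- decompose v (-N) with the negative dichotomy at time -N
  obtain ⟨s1, hs1, u1, hu1, hsum1⟩ :=
    Submodule.mem_sup.mp (by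
      rw [codisjoint_iff.mp (hcm (-(N:ℤ)) (by omega)).codisjoint]; trivial :
      v (-(N:ℤ)) ∈ Esm (-(N:ℤ)) ⊔ Eum (-(N:ℤ)))
  set Pp : ℝ := Cp * lp ^ N with hPpdef
  set Pm : ℝ := Cm * lm ^ N with hPmdef
  have hPp : 0 < Pp := by positivity
  have hPm : 0 < Pm := by positivity
  have hlpN1 : lp ^ N ≤ 1 := pow_le_one₀ hlp0.le hlp1.le
  have hlmN1 : lm ^ N ≤ 1 := pow_le_one₀ hlm0.le hlm1.le
  have hPpCp : Pp ≤ Cp := by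
    calc Pp = Cp * lp ^ N := hPpdef
    _ ≤ Cp * 1 := mul_le_mul_of_nonneg_left hlpN1 hCp.le
    _ = Cp := mul_one Cp
  have hPmCm : Pm ≤ Cm := by
    calc Pm = Cm * lm ^ N := hPmdef
    _ ≤ Cm * 1 := mul_le_mul_of_nonneg_left hlmN1 hCm.le
    _ = Cm := mul_one Cm
  ------------------------------------------------------------------
  -- positive side: bound ‖u0‖
  ------------------------------------------------------------------
  have hstab : ‖Phi m A 0 N s0‖ ≤ Pp * ‖s0‖ := hsp 0 le_rfl N hNpos s0 hs0
  have hexp : Pp⁻¹ * ‖u0‖ ≤ ‖Phi m A 0 N u0‖ := by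
    have h := hup 0 le_rfl N hNpos u0 hu0
    rwa [zpow_neg, zpow_natCast, ← mul_inv] at h
  have hvN : v (N:ℤ) = Phi m A 0 N s0 + Phi m A 0 N u0 := by
    rw [claimA N le_rfl, ← hsum0, Phi_add]
  have hPhiu0 : ‖Phi m A 0 N u0‖ ≤ M + Pp * ‖s0‖ := by
    have e : Phi m A 0 N u0 = v (N:ℤ) - Phi m A 0 N s0 := by rw [hvN]; abel
    rw [e]
    exact (norm_sub_le _ _).trans (add_le_add hbndN hstab)
  have hs0n : ‖s0‖ ≤ M + ‖u0‖ := by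
    have e : s0 = v 0 - u0 := by rw [← hsum0]; abel
    rw [e]
    exact (norm_sub_le _ _).trans (add_le_add_left hbnd0 _)
  have hu0key : ‖u0‖ ≤ Pp * (M + Pp * ‖s0‖) := by
    have h6 : Pp⁻¹ * ‖u0‖ ≤ M + Pp * ‖s0‖ := hexp.trans hPhiu0
    calc ‖u0‖ = Pp * (Pp⁻¹ * ‖u0‖) := by field_simp
    _ ≤ Pp * (M + Pp * ‖s0‖) := mul_le_mul_of_nonneg_left h6 hPp.le
  have hu0b : ‖u0‖ ≤ 2 * (1 + Cp) * Pp * M := by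
    have h7 : Pp * Pp * ‖s0‖ ≤ Pp * Pp * (M + ‖u0‖) :=
      mul_le_mul_of_nonneg_left hs0n (mul_pos hPp hPp).le
    have h8 : Pp ^ 2 * ‖u0‖ ≤ (1/2) * ‖u0‖ :=
      mul_le_mul_of_nonneg_right hNp (norm_nonneg u0)
    have h9 : Pp ^ 2 * M ≤ Cp * Pp * M := by
      nlinarith [mul_nonneg (mul_nonneg (sub_nonneg.mpr hPpCp) hPp.le) hM0]
    linarith [hu0key, h7, h8, h9]
  have hip : ⟪z, v 0⟫ ≤ 2 * (1 + Cp) * Pp * M := by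
    have e : ⟪z, v 0⟫ = ⟪z, u0⟫ := by
      rw [← hsum0, inner_add_right, hzs s0 hs0, zero_add]
    rw [e]
    calc ⟪z, u0⟫ ≤ ‖z‖ * ‖u0‖ := real_inner_le_norm z u0
    _ = ‖u0‖ := by rw [hz1, one_mul]
    _ ≤ _ := hu0b
  ------------------------------------------------------------------
  -- negative side: lower bound for ⟪z, v 0⟫
  ------------------------------------------------------------------
  have hstabm : ‖Phi m A (-(N:ℤ)) N s1‖ ≤ Pm * ‖s1‖ :=
    hsm (-(N:ℤ)) N hNpos (by omega) s1 hs1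
  have hexpm : Pm⁻¹ * ‖u1‖ ≤ ‖Phi m A (-(N:ℤ)) N u1‖ := by
    have h := hum (-(N:ℤ)) N hNpos (by omega) u1 hu1
    rwa [zpow_neg, zpow_natCast, ← mul_inv] at h
  have hPhiu1mem : Phi m A (-(N:ℤ)) N u1 ∈ Eum 0 := by
    have h := claimC u1 hu1 N le_rfl
    rwa [show -(N:ℤ) + (N:ℤ) = 0 by ring] at h
  have hv0' : v 0 = Phi m A (-(N:ℤ)) N s1 + Phi m A (-(N:ℤ)) N u1 + z := by
    rw [hv0, ← hsum1, Phi_add]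
  have hinner0 : ⟪z, v 0⟫ = ⟪z, Phi m A (-(N:ℤ)) N s1⟫ + 1 := by
    rw [hv0', inner_add_right, inner_add_right, hzu _ hPhiu1mem, add_zero,
      real_inner_self_eq_norm_mul_norm, hz1, one_mul]
  have hPhiu1 : ‖Phi m A (-(N:ℤ)) N u1‖ ≤ M + 1 + Pm * ‖s1‖ := by
    have e : Phi m A (-(N:ℤ)) N u1 = v 0 - z - Phi m A (-(N:ℤ)) N s1 := by
      rw [hv0']; abel
    rw [e]
    calc ‖v 0 - z - Phi m A (-(N:ℤ)) N s1‖
        ≤ ‖v 0 - z‖ + ‖Phi m A (-(N:ℤ)) N s1‖ := norm_sub_le _ _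
    _ ≤ (‖v 0‖ + ‖z‖) + Pm * ‖s1‖ := add_le_add (norm_sub_le _ _) hstabm
    _ ≤ M + 1 + Pm * ‖s1‖ := by rw [hz1]; linarith
  have hs1n : ‖s1‖ ≤ M + ‖u1‖ := by
    have e : s1 = v (-(N:ℤ)) - u1 := by rw [← hsum1]; abel
    rw [e]
    exact (norm_sub_le _ _).trans (add_le_add_left hbndmN _)
  have hu1key : ‖u1‖ ≤ Pm * (M + 1 + Pm * ‖s1‖) := by
    have h6 : Pm⁻¹ * ‖u1‖ ≤ M + 1 + Pm * ‖s1‖ := hexpm.trans hPhiu1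
    calc ‖u1‖ = Pm * (Pm⁻¹ * ‖u1‖) := by field_simp
    _ ≤ Pm * (M + 1 + Pm * ‖s1‖) := mul_le_mul_of_nonneg_left h6 hPm.le
  have hu1b : ‖u1‖ ≤ 2 * (1 + Cm) * Pm * (M + 1) := by
    have h7 : Pm * Pm * ‖s1‖ ≤ Pm * Pm * (M + ‖u1‖) :=
      mul_le_mul_of_nonneg_left hs1n (mul_pos hPm hPm).le
    have h8 : Pm ^ 2 * ‖u1‖ ≤ (1/2) * ‖u1‖ :=
      mul_le_mul_of_nonneg_right hNm (norm_nonneg u1)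
    have h9 : Pm ^ 2 * M ≤ Cm * Pm * M := by
      nlinarith [mul_nonneg (mul_nonneg (sub_nonneg.mpr hPmCm) hPm.le) hM0]
    linarith [hu1key, h7, h8, h9, mul_nonneg hCm.le hPm.le]
  have hs1b : Pm * ‖s1‖ ≤ (1 + 2 * Cm * (1 + Cm)) * (Pm * (M + 1)) := by
    have h10 : Pm * ‖s1‖ ≤ Pm * (M + ‖u1‖) := mul_le_mul_of_nonneg_left hs1n hPm.le
    have h11 : Pm * ‖u1‖ ≤ Pm * (2 * (1 + Cm) * Pm * (M + 1)) :=
      mul_le_mul_of_nonneg_left hu1b hPm.le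
    have h12 : Pm * (2 * (1 + Cm) * Pm * (M + 1)) ≤ 2 * Cm * (1 + Cm) * (Pm * (M + 1)) := by
      nlinarith [mul_nonneg (mul_nonneg (mul_nonneg (by linarith : (0:ℝ) ≤ 2 * (1 + Cm))
        (sub_nonneg.mpr hPmCm)) hPm.le) (by linarith : (0:ℝ) ≤ M + 1)]
    linarith [h10, h11, h12, mul_nonneg hPm.le hM0, hPm.le]
  have hlow : 1 - (1 + 2 * Cm * (1 + Cm)) * (Pm * (M + 1)) ≤ ⟪z, v 0⟫ := by
    have habs : |⟪z, Phi m A (-(N:ℤ)) N s1⟫| ≤ Pm * ‖s1‖ := by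
      calc |⟪z, Phi m A (-(N:ℤ)) N s1⟫| ≤ ‖z‖ * ‖Phi m A (-(N:ℤ)) N s1‖ :=
        abs_real_inner_le_norm _ _
      _ = ‖Phi m A (-(N:ℤ)) N s1‖ := by rw [hz1, one_mul]
      _ ≤ Pm * ‖s1‖ := hstabm
    have := (abs_le.mp habs).1
    rw [hinner0]
    linarith [hs1b]
  ------------------------------------------------------------------
  -- contradiction
  ------------------------------------------------------------------
  have hMle : M ≤ L * (2 * (N:ℝ)) := by
    have h2N1 : (1:ℝ) ≤ ((2*N : ℕ) : ℝ) := by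
      exact_mod_cast Nat.one_le_iff_ne_zero.mpr (by omega)
    have := Real.rpow_le_rpow_of_exponent_le h2N1 (le_of_lt hγ.2)
    rw [Real.rpow_one] at this
    calc M ≤ L * ((2*N : ℕ) : ℝ) := mul_le_mul_of_nonneg_left this hL.le
    _ = L * (2 * (N:ℝ)) := by push_cast; ring
  have hfinal : (1:ℝ) ≤ 2 * (1 + Cp) * Pp * M + (1 + 2 * Cm * (1 + Cm)) * (Pm * (M + 1)) := by
    linarith [hlow.trans hip]
  have hub : 2 * (1 + Cp) * Pp * M + (1 + 2 * Cm * (1 + Cm)) * (Pm * (M + 1))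
      ≤ 2 * (1 + Cp) * Pp * (L * (2 * (N:ℝ))) +
        Pm * (L * (2 * (N:ℝ)) + 1) * (1 + 2 * Cm * (1 + Cm)) := by
    have c1 : 0 ≤ 2 * (1 + Cp) * Pp := by positivity
    have c2 : (0:ℝ) ≤ 1 + 2 * Cm * (1 + Cm) := by positivity
    have h13 : 2 * (1 + Cp) * Pp * M ≤ 2 * (1 + Cp) * Pp * (L * (2 * (N:ℝ))) :=
      mul_le_mul_of_nonneg_left hMle c1
    have h14 : Pm * (M + 1) ≤ Pm * (L * (2 * (N:ℝ)) + 1) :=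
      mul_le_mul_of_nonneg_left (by linarith) hPm.le
    have h15 : (1 + 2 * Cm * (1 + Cm)) * (Pm * (M + 1))
        ≤ (1 + 2 * Cm * (1 + Cm)) * (Pm * (L * (2 * (N:ℝ)) + 1)) :=
      mul_le_mul_of_nonneg_left h14 c2
    linarith [h15, h13]
  have h16 : (1:ℝ) < 1 := hfinal.trans_lt (hub.trans_lt (by linarith [hNE]))
  exact absurd h16 (lt_irrefl 1)
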